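/- For every continuous function f: [0,T] → R there exists a sequence of partitions (π_n) of [0,T] with mesh tending to zero such that Σ_{[s,t]∈π_n} |f(t∧u) − f(s∧u)|² → 0 for every u ∈ [0,T], i.e., f has zero quadratic variation along (π_n). -/

import Mathlib

open Finset Filter Topology

/-- A partition of `[a,b]` given by finitely many monotone grid points. -/
structure PartitionGrid (a b : ℝ) where
  n : ℕ
  t : Fin (n + 1) → ℝ
  mono : Monotone t
  first : t 0 = a
  last : t (Fin.last n) = b

namespace PartitionGrid

variable {a b : ℝ}

/-- The mesh of a partition: the largest interval length. -/
noncomputable def mesh (π : PartitionGrid a b) : ℝ :=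
  ⨆ i : Fin π.n, (π.t i.succ - π.t i.castSucc)

/-- The Riemann-type sum `∑_{[s,t] ∈ π} F s t` over the intervals of a partition. -/
def rsum {E : Type*} [AddCommMonoid E] (π : PartitionGrid a b) (F : ℝ → ℝ → E) : E :=
  ∑ i : Fin π.n, F (π.t i.castSucc) (π.t i.succ)

end PartitionGrid

/-- `RiemannLimit a b F L`: the Riemann-type sums of `F` over partitions of `[a,b]`
converge to `L` as the mesh tends to `0`. -/
def RiemannLimit {E : Type*} [SeminormedAddCommGroup E] (a b : ℝ) (F : ℝ → ℝ → E)
    (L : E) : Prop :=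
  ∀ ε > 0, ∃ δ > 0, ∀ π : PartitionGrid a b, π.mesh < δ → ‖π.rsum F - L‖ < ε

/-- `X` has finite `p`-variation on `[a,b]` (boundedness of the partition sums). -/
def FinitePVar {E : Type*} [SeminormedAddCommGroup E] (p a b : ℝ) (X : ℝ → E) : Prop :=
  ∃ M : ℝ, ∀ π : PartitionGrid a b,
    (∑ i : Fin π.n, ‖X (π.t i.succ) - X (π.t i.castSucc)‖ ^ p) ≤ M

/-- `X ∈ 𝒱^p([a,b])`: continuous and of finite `p`-variation. -/
def MemVp {E : Type*} [SeminormedAddCommGroup E] (p a b : ℝ) (X : ℝ → E) : Prop :=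
  ContinuousOn X (Set.Icc a b) ∧ FinitePVar p a b X

/-- Finite `r`-variation for a two-parameter (remainder) function. -/
def FiniteRVar2 {E : Type*} [SeminormedAddCommGroup E] (r a b : ℝ) (R : ℝ → ℝ → E) : Prop :=
  ∃ M : ℝ, ∀ π : PartitionGrid a b,
    (∑ i : Fin π.n, ‖R (π.t i.castSucc) (π.t i.succ)‖ ^ r) ≤ M

/-- Euclidean inner product on `Fin d → ℝ`. -/
def dot {d : ℕ} (x y : Fin d → ℝ) : ℝ := ∑ i, x i * y i

/-- Matrix-vector multiplication. -/
def mulVec' {d : ℕ} (M : Fin d → Fin d → ℝ) (v : Fin d → ℝ) : Fin d → ℝ :=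
  fun i => ∑ j, M i j * v j

/-- `Y` is controlled by `X` with Gubinelli derivative `Y'` (vector case). -/
def Controlled {d : ℕ} (q r a b : ℝ) (X Y : ℝ → Fin d → ℝ)
    (Y' : ℝ → Fin d → Fin d → ℝ) : Prop :=
  MemVp q a b Y' ∧
    FiniteRVar2 r a b (fun s t => Y t - Y s - mulVec' (Y' s) (X t - X s))

/-- `Y` is controlled by `X` with Gubinelli derivative `Y'` (scalar case). -/
def Controlled1 (q r a b : ℝ) (X Y Y' : ℝ → ℝ) : Prop :=
  MemVp q a b Y' ∧
    FiniteRVar2 r a b (fun s t => Y t - Y s - Y' s * (X t - X s))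

/-- A control function on the simplex `Δ_T`. -/
def IsControlFun (T : ℝ) (ω : ℝ → ℝ → ℝ) : Prop :=
  ContinuousOn (fun z : ℝ × ℝ => ω z.1 z.2)
      {z : ℝ × ℝ | 0 ≤ z.1 ∧ z.1 ≤ z.2 ∧ z.2 ≤ T} ∧
    (∀ s ∈ Set.Icc (0 : ℝ) T, ω s s = 0) ∧
    (∀ s t : ℝ, 0 ≤ s → s ≤ t → t ≤ T → 0 ≤ ω s t) ∧
    (∀ s u t : ℝ, 0 ≤ s → s ≤ u → u ≤ t → t ≤ T → ω s u + ω u t ≤ ω s t)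

/-- An increasing (refining) sequence of partitions with mesh tending to zero. -/
def IncreasingSeq {T : ℝ} (π : ℕ → PartitionGrid 0 T) : Prop :=
  (∀ n, Set.range (π n).t ⊆ Set.range (π (n + 1)).t) ∧
    Tendsto (fun n => (π n).mesh) atTop (𝓝 0)

/-- `f` has quadratic variation `Q` along the partition sequence `π` in the sense
of Föllmer. -/
def HasQV {T : ℝ} (π : ℕ → PartitionGrid 0 T) (f : ℝ → ℝ) (Q : ℝ → ℝ) : Prop :=
  ContinuousOn Q (Set.Icc 0 T) ∧
    ∀ u ∈ Set.Icc (0 : ℝ) T,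
      Tendsto (fun n => ∑ i : Fin (π n).n,
          (f (min ((π n).t i.succ) u) - f (min ((π n).t i.castSucc) u)) ^ 2)
        atTop (𝓝 (Q u))


open Classical in
/-- Points subdividing the `i`-th uniform block of `[0,T]` so that `f` moves by equal
increments, obtained by the intermediate value theorem. -/
noncomputable def qvPts (f : ℝ → ℝ) (T : ℝ) (N m : ℕ) (i : ℕ) : ℕ → ℝ
  | 0 => (i : ℝ) * (T / N)
  | j + 1 =>
      if h : ∃ x ∈ Set.Icc (qvPts f T N m i j) (((i : ℝ) + 1) * (T / N)),
          f x = f ((i : ℝ) * (T / N)) +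
            ((j : ℝ) + 1) * ((f (((i : ℝ) + 1) * (T / N)) - f ((i : ℝ) * (T / N))) / (m : ℝ))
      then h.choose
      else ((i : ℝ) + 1) * (T / N)

lemma qvPts_step (f : ℝ → ℝ) (T : ℝ) (hT : 0 < T) (hf : ContinuousOn f (Set.Icc 0 T))
    (N m : ℕ) (hN : 0 < N) (hm : 0 < m) (i j : ℕ) (hi : i + 1 ≤ N) (hj : j + 1 ≤ m)
    (h1 : (i : ℝ) * (T / N) ≤ qvPts f T N m i j)
    (h2 : qvPts f T N m i j ≤ ((i : ℝ) + 1) * (T / N))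
    (h3 : f (qvPts f T N m i j) = f ((i : ℝ) * (T / N)) +
      (j : ℝ) * ((f (((i : ℝ) + 1) * (T / N)) - f ((i : ℝ) * (T / N))) / (m : ℝ))) :
    qvPts f T N m i (j + 1) ∈ Set.Icc (qvPts f T N m i j) (((i : ℝ) + 1) * (T / N)) ∧
      f (qvPts f T N m i (j + 1)) = f ((i : ℝ) * (T / N)) +
        ((j : ℝ) + 1) * ((f (((i : ℝ) + 1) * (T / N)) - f ((i : ℝ) * (T / N))) / (m : ℝ)) := by
  have hN0 : (0:ℝ) < (N:ℝ) := by exact_mod_cast hN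
  have hm0 : (0:ℝ) < (m:ℝ) := by exact_mod_cast hm
  have hiN : (i:ℝ) + 1 ≤ (N:ℝ) := by exact_mod_cast hi
  have hjm : (j:ℝ) + 1 ≤ (m:ℝ) := by exact_mod_cast hj
  have hub : ((i:ℝ)+1) * (T/N) ≤ T := by
    calc ((i:ℝ)+1) * (T/N) ≤ (N:ℝ) * (T/N) :=
          mul_le_mul_of_nonneg_right hiN (by positivity)
      _ = T := by field_simp
  have hlb : (0:ℝ) ≤ (i:ℝ) * (T/N) := by positivity
  have hsub : Set.Icc (qvPts f T N m i j) (((i : ℝ) + 1) * (T / N)) ⊆ Set.Icc 0 T :=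
    Set.Icc_subset_Icc (le_trans hlb h1) hub
  have hfb : f (((i:ℝ)+1) * (T/N)) = f ((i:ℝ) * (T/N)) +
      (m:ℝ) * ((f (((i:ℝ)+1) * (T/N)) - f ((i:ℝ) * (T/N))) / (m:ℝ)) := by
    field_simp
    ring
  have hmem : f ((i : ℝ) * (T / N)) +
      ((j : ℝ) + 1) * ((f (((i : ℝ) + 1) * (T / N)) - f ((i : ℝ) * (T / N))) / (m : ℝ)) ∈
      Set.uIcc (f (qvPts f T N m i j)) (f (((i:ℝ)+1) * (T/N))) := by
    rw [Set.mem_uIcc, h3]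
    set d := (f (((i : ℝ) + 1) * (T / N)) - f ((i : ℝ) * (T / N))) / (m : ℝ) with hd
    have hj0 : (0:ℝ) ≤ (j:ℝ) := Nat.cast_nonneg j
    rcases le_or_gt 0 d with hd0 | hd0
    · left; constructor
      · nlinarith
      · rw [hfb]; nlinarith
    · right; constructor
      · rw [hfb]; nlinarith
      · nlinarith
  have hcont : ContinuousOn f (Set.uIcc (qvPts f T N m i j) (((i:ℝ)+1) * (T/N))) := by
    rw [Set.uIcc_of_le h2]; exact hf.mono hsub
  obtain ⟨x, hx, hfx⟩ := intermediate_value_uIcc hcont hmem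
  rw [Set.uIcc_of_le h2] at hx
  have hex : ∃ x ∈ Set.Icc (qvPts f T N m i j) (((i : ℝ) + 1) * (T / N)),
      f x = f ((i : ℝ) * (T / N)) +
        ((j : ℝ) + 1) * ((f (((i : ℝ) + 1) * (T / N)) - f ((i : ℝ) * (T / N))) / (m : ℝ)) :=
    ⟨x, hx, hfx⟩
  rw [qvPts, dif_pos hex]
  exact ⟨hex.choose_spec.1, hex.choose_spec.2⟩

lemma qvPts_spec (f : ℝ → ℝ) (T : ℝ) (hT : 0 < T) (hf : ContinuousOn f (Set.Icc 0 T))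
    (N m : ℕ) (hN : 0 < N) (hm : 0 < m) (i : ℕ) (hi : i + 1 ≤ N) :
    ∀ j, j < m →
      ((i : ℝ) * (T / N) ≤ qvPts f T N m i j ∧
        qvPts f T N m i j ≤ ((i : ℝ) + 1) * (T / N)) ∧
      f (qvPts f T N m i j) = f ((i : ℝ) * (T / N)) +
        (j : ℝ) * ((f (((i : ℝ) + 1) * (T / N)) - f ((i : ℝ) * (T / N))) / (m : ℝ)) := by
  have hN0 : (0:ℝ) < (N:ℝ) := by exact_mod_cast hN
  intro j
  induction j with
  | zero =>
    intro _
    have h0 : (0:ℝ) ≤ T / N := by positivity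
    refine ⟨⟨?_, ?_⟩, ?_⟩
    · simp [qvPts]
    · show (i:ℝ) * (T / N) ≤ ((i:ℝ)+1) * (T/N)
      nlinarith
    · show f ((i:ℝ) * (T / N)) = _
      simp
  | succ j ih =>
    intro hj
    obtain ⟨⟨ha, hb⟩, hc⟩ := ih (Nat.lt_of_succ_lt hj)
    have hstep := qvPts_step f T hT hf N m hN hm i j hi (le_of_lt hj) ha hb hc
    refine ⟨⟨le_trans ha hstep.1.1, hstep.1.2⟩, ?_⟩
    rw [hstep.2]; push_cast; ring

lemma qvPts_zero (f : ℝ → ℝ) (T : ℝ) (N m i : ℕ) : qvPts f T N m i 0 = (i : ℝ) * (T / N) := rfl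

lemma qv_key (T : ℝ) (hT : 0 < T) (f : ℝ → ℝ) (hf : ContinuousOn f (Set.Icc 0 T))
    (C : ℝ) (hC : ∀ x ∈ Set.Icc (0:ℝ) T, |f x| ≤ C)
    (N m : ℕ) (hN : 0 < N) (hm : 0 < m) :
    ∃ π : PartitionGrid 0 T, π.n = N * m ∧
      (∀ i : Fin π.n, π.t i.succ - π.t i.castSucc ≤ T / N) ∧
      (∀ i : Fin π.n, |f (π.t i.succ) - f (π.t i.castSucc)| ≤ 2 * C / m) := by
  have hN0 : (0:ℝ) < (N:ℝ) := by exact_mod_cast hN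
  have hm0 : (0:ℝ) < (m:ℝ) := by exact_mod_cast hm
  set s : ℕ → ℝ := fun k => qvPts f T N m (k / m) (k % m) with hs
  have hmemu : ∀ l : ℕ, l ≤ N → (l:ℝ) * (T/N) ∈ Set.Icc (0:ℝ) T := by
    intro l hl
    constructor
    · positivity
    · calc (l:ℝ)*(T/N) ≤ (N:ℝ)*(T/N) :=
            mul_le_mul_of_nonneg_right (by exact_mod_cast hl) (by positivity)
        _ = T := by field_simp
  have hstep : ∀ k, k < N * m →
      (s k ≤ s (k+1) ∧ ((k/m : ℕ):ℝ) * (T/N) ≤ s k ∧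
        s (k+1) ≤ (((k/m : ℕ):ℝ)+1) * (T/N)) ∧
      |f (s (k+1)) - f (s k)| ≤ 2*C/m := by
    intro k hk
    have hi : k / m < N := (Nat.div_lt_iff_lt_mul hm).mpr hk
    have hj : k % m < m := Nat.mod_lt _ hm
    have hkd : m * (k / m) + k % m = k := Nat.div_add_mod k m
    set i := k / m with hidef
    set j := k % m with hjdef
    obtain ⟨⟨ha, hb⟩, hc⟩ := qvPts_spec f T hT hf N m hN hm i hi j hj
    have hsk : s k = qvPts f T N m i j := rfl
    have hΔ : |f (((i:ℝ)+1)*(T/N)) - f ((i:ℝ)*(T/N))| ≤ 2*C := by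
      have h1 := hC _ (hmemu i (by omega))
      have h2 := hC _ (hmemu (i+1) (by omega))
      push_cast at h2
      calc |f (((i:ℝ)+1)*(T/N)) - f ((i:ℝ)*(T/N))|
          ≤ |f (((i:ℝ)+1)*(T/N))| + |f ((i:ℝ)*(T/N))| := abs_sub _ _
        _ ≤ C + C := add_le_add h2 h1
        _ = 2*C := by ring
    have hq : |(f (((i:ℝ)+1)*(T/N)) - f ((i:ℝ)*(T/N))) / (m:ℝ)| ≤ 2*C/m := by
      rw [abs_div, abs_of_pos hm0]
      exact div_le_div_of_nonneg_right hΔ hm0.le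
    rcases Nat.lt_or_ge (j+1) m with hcase | hcase
    · have ek : k + 1 = m * i + (j+1) := by omega
      have e1 : (k+1) / m = i := by
        rw [ek, Nat.mul_add_div hm, Nat.div_eq_of_lt hcase, Nat.add_zero]
      have e2 : (k+1) % m = j + 1 := by
        rw [ek, Nat.mul_add_mod, Nat.mod_eq_of_lt hcase]
      have hstep' := qvPts_step f T hT hf N m hN hm i j hi (le_of_lt hcase) ha hb hc
      have hsk1 : s (k+1) = qvPts f T N m i (j+1) := by
        simp only [hs]; rw [e1, e2]
      refine ⟨⟨?_, ha, ?_⟩, ?_⟩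
      · rw [hsk1, hsk]; exact hstep'.1.1
      · rw [hsk1]; exact hstep'.1.2
      · have heq : f (s (k+1)) - f (s k)
            = (f (((i:ℝ)+1)*(T/N)) - f ((i:ℝ)*(T/N))) / (m:ℝ) := by
          rw [hsk1, hsk, hstep'.2, hc]; ring
        rw [heq]; exact hq
    · have hjm : j + 1 = m := by omega
      have hmul : m * (i + 1) = m * i + m := by ring
      have ek : k + 1 = m * (i + 1) := by omega
      have e1 : (k+1) / m = i + 1 := by rw [ek, Nat.mul_div_cancel_left _ hm]
      have e2 : (k+1) % m = 0 := by rw [ek, Nat.mul_mod_right]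
      have hsk1 : s (k+1) = ((i:ℝ)+1) * (T/N) := by
        simp only [hs]; rw [e1, e2, qvPts_zero]; push_cast; ring
      refine ⟨⟨?_, ha, ?_⟩, ?_⟩
      · rw [hsk1, hsk]; exact hb
      · rw [hsk1]
      · have hjR : (j:ℝ) = (m:ℝ) - 1 := by
          have := congrArg (Nat.cast : ℕ → ℝ) hjm
          push_cast at this; linarith
        have heq : f (s (k+1)) - f (s k)
            = (f (((i:ℝ)+1)*(T/N)) - f ((i:ℝ)*(T/N))) / (m:ℝ) := by
          rw [hsk1, hsk, hc, hjR]
          field_simp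
          ring
        rw [heq]; exact hq
  have hmono' : ∀ a d : ℕ, a + d ≤ N * m → s a ≤ s (a + d) := by
    intro a d
    induction d with
    | zero => intro _; simp
    | succ d ihd =>
      intro h
      have h1 : a + d < N*m := by omega
      calc s a ≤ s (a+d) := ihd (by omega)
        _ ≤ s (a+d+1) := (hstep (a+d) h1).1.1
  have hfirst : s 0 = 0 := by
    simp only [hs, Nat.zero_div, Nat.zero_mod, qvPts_zero]
    simp
  have hlast : s (N*m) = T := by
    simp only [hs, Nat.mul_div_cancel _ hm, Nat.mul_mod_left, qvPts_zero]
    field_simp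
  refine ⟨⟨N*m, fun k => s k.val, ?_, ?_, ?_⟩, rfl, ?_, ?_⟩
  · intro a b hab
    obtain ⟨d, hd⟩ := Nat.exists_eq_add_of_le (show a.val ≤ b.val from hab)
    simp only [hd]
    exact hmono' a.val d (by omega)
  · show s (0 : Fin (N*m+1)).val = 0
    rw [Fin.val_zero]; exact hfirst
  · show s (Fin.last (N*m)).val = T
    rw [Fin.val_last]; exact hlast
  · intro idx
    have h := (hstep idx.val idx.isLt).1
    have he : (((idx.val/m : ℕ):ℝ)+1) * (T/N) - ((idx.val/m : ℕ):ℝ) * (T/N) = T/N := by ring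
    show s idx.succ.val - s idx.castSucc.val ≤ T / N
    rw [Fin.val_succ, Fin.coe_castSucc]
    linarith [h.2.1, h.2.2]
  · intro idx
    have h := (hstep idx.val idx.isLt).2
    show |f (s idx.succ.val) - f (s idx.castSucc.val)| ≤ 2*C/m
    rw [Fin.val_succ, Fin.coe_castSucc]
    exact h


lemma const_div_succ_tendsto (c : ℝ) :
    Filter.Tendsto (fun n : ℕ => c / ((n : ℝ) + 1)) Filter.atTop (𝓝 0) := by
  have h := (tendsto_const_div_atTop_nhds_zero_nat c).comp (tendsto_add_atTop_nat 1)
  have he : (fun n : ℕ => c / ((n:ℝ)+1)) = (fun n : ℕ => c / (n:ℝ)) ∘ (fun a => a + 1) := by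
    funext n; simp only [Function.comp]; push_cast; ring
  rwa [he]


/-- every continuous function has a sequence of partitions, with
mesh tending to zero, along which its quadratic variation vanishes. -/

theorem exists_partitionSeq_zero_qv (T : ℝ) (hT : 0 < T)
    (f : ℝ → ℝ) (hf : ContinuousOn f (Set.Icc 0 T)) :
    ∃ π : ℕ → PartitionGrid 0 T,
      Tendsto (fun n => (π n).mesh) atTop (𝓝 0) ∧
      ∀ u ∈ Set.Icc (0 : ℝ) T,
        Tendsto (fun n => ∑ i : Fin (π n).n,
            (f (min ((π n).t i.succ) u) - f (min ((π n).t i.castSucc) u)) ^ 2)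
          atTop (𝓝 0) := by
  obtain ⟨C, hC0⟩ := (isCompact_Icc (a := (0:ℝ)) (b := T)).exists_bound_of_continuousOn hf
  have hC : ∀ x ∈ Set.Icc (0:ℝ) T, |f x| ≤ C := by
    intro x hx; simpa [Real.norm_eq_abs] using hC0 x hx
  have hkey := fun n : ℕ => qv_key T hT f hf C hC (n+1) ((n+1)*(n+1))
    (Nat.succ_pos n) (by positivity)
  choose π hπn hgap hinc using hkey
  have hgap' : ∀ n (i : Fin (π n).n),
      (π n).t i.succ - (π n).t i.castSucc ≤ T / ((n:ℝ)+1) := by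
    intro n i
    have := hgap n i
    push_cast at this
    exact this
  refine ⟨π, ?_, ?_⟩
  · apply tendsto_of_tendsto_of_tendsto_of_le_of_le
      (g := fun _ : ℕ => (0:ℝ)) (h := fun n : ℕ => T / ((n:ℝ)+1))
      tendsto_const_nhds (const_div_succ_tendsto T)
    · intro n
      have hpos : 0 < (π n).n := by rw [hπn]; positivity
      have i0 : Fin (π n).n := ⟨0, hpos⟩
      have h0 : 0 ≤ (π n).t i0.succ - (π n).t i0.castSucc :=
        sub_nonneg.mpr ((π n).mono (Fin.castSucc_le_succ i0))
      have hle := le_ciSup (f := fun i : Fin (π n).n =>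
        (π n).t i.succ - (π n).t i.castSucc)
        (Set.Finite.bddAbove (Set.finite_range _)) i0
      exact le_trans h0 hle
    · intro n
      exact Real.iSup_le (fun i => hgap' n i) (by positivity)
  · intro u hu
    have hptIcc : ∀ n (v : Fin ((π n).n + 1)), (π n).t v ∈ Set.Icc (0:ℝ) T := by
      intro n v
      constructor
      · have h := (π n).mono (Fin.zero_le v); rwa [(π n).first] at h
      · have h := (π n).mono (Fin.le_last v); rwa [(π n).last] at h
    rw [Metric.tendsto_atTop]
    intro ε hε
    have huc := (isCompact_Icc (a := (0:ℝ)) (b := T)).uniformContinuousOn_of_continuous hf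
    rw [Metric.uniformContinuousOn_iff] at huc
    set ε' := min 1 (ε/2) with hε'def
    have hε'pos : 0 < ε' := lt_min one_pos (half_pos hε)
    have hε'sq : ε' ^ 2 ≤ ε / 2 := by
      have h1 : ε' ≤ 1 := min_le_left _ _
      have h2 : ε' ≤ ε/2 := min_le_right _ _
      nlinarith
    obtain ⟨δ, hδ, hδspec⟩ := huc ε' hε'pos
    have hev : ∀ᶠ n : ℕ in atTop,
        (2*C)^2/((n:ℝ)+1) < ε/2 ∧ T/((n:ℝ)+1) < δ := by
      filter_upwards [(const_div_succ_tendsto ((2*C)^2)).eventually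
          (gt_mem_nhds (half_pos hε)),
        (const_div_succ_tendsto T).eventually (gt_mem_nhds hδ)] with n h1 h2
      exact ⟨h1, h2⟩
    obtain ⟨n₀, hn₀⟩ := eventually_atTop.mp hev
    refine ⟨n₀, fun n hn => ?_⟩
    obtain ⟨hA, hB⟩ := hn₀ n hn
    classical
    set t := (π n).t with ht
    have hsum_nonneg : (0:ℝ) ≤ ∑ i : Fin (π n).n,
        (f (min (t i.succ) u) - f (min (t i.castSucc) u)) ^ 2 :=
      Finset.sum_nonneg fun i _ => sq_nonneg _
    rw [Real.dist_eq, sub_zero, abs_of_nonneg hsum_nonneg]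
    -- termwise bound
    have hterm : ∀ i : Fin (π n).n,
        (f (min (t i.succ) u) - f (min (t i.castSucc) u)) ^ 2 ≤
          (f (t i.succ) - f (t i.castSucc)) ^ 2 +
            (if t i.castSucc < u ∧ u < t i.succ then ε'^2 else 0) := by
      intro i
      have hite : (0:ℝ) ≤ (if t i.castSucc < u ∧ u < t i.succ then ε'^2 else 0) := by
        split
        · positivity
        · exact le_refl 0
      rcases le_or_gt u (t i.castSucc) with h1 | h1
      · have e1 : min (t i.castSucc) u = u := min_eq_right h1
        have e2 : min (t i.succ) u = u :=
          min_eq_right (le_trans h1 ((π n).mono (Fin.castSucc_le_succ i)))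
        rw [e1, e2, sub_self]
        have := sq_nonneg (f (t i.succ) - f (t i.castSucc))
        simpa using add_nonneg this hite
      · rcases le_or_gt (t i.succ) u with h2 | h2
        · rw [min_eq_left h2, min_eq_left (le_of_lt h1)]
          linarith
        · rw [min_eq_right (le_of_lt h2), min_eq_left (le_of_lt h1),
            if_pos ⟨h1, h2⟩]
          have hmem1 : t i.castSucc ∈ Set.Icc (0:ℝ) T := hptIcc n _
          have hd : dist u (t i.castSucc) < δ := by
            rw [Real.dist_eq, abs_of_nonneg (by linarith)]
            have hg := hgap' n i
            linarith
          have hlt := hδspec u hu _ hmem1 hd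
          rw [Real.dist_eq] at hlt
          have hb1 : (f u - f (t i.castSucc))^2 ≤ ε'^2 := by
            have := pow_le_pow_left₀ (abs_nonneg (f u - f (t i.castSucc)))
              (le_of_lt hlt) 2
            rwa [sq_abs] at this
          linarith [sq_nonneg (f (t i.succ) - f (t i.castSucc))]
    -- full-increment sum bound
    have hS : ∑ i : Fin (π n).n, (f (t i.succ) - f (t i.castSucc)) ^ 2 ≤
        (2*C)^2 / ((n:ℝ)+1) := by
      have hbd : ∀ i ∈ Finset.univ (α := Fin (π n).n),
          (f (t i.succ) - f (t i.castSucc)) ^ 2 ≤ (2*C/((((n:ℕ)+1)*((n:ℕ)+1) : ℕ):ℝ))^2 := by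
        intro i _
        have := pow_le_pow_left₀ (abs_nonneg (f (t i.succ) - f (t i.castSucc)))
          (hinc n i) 2
        rwa [sq_abs] at this
      calc ∑ i : Fin (π n).n, (f (t i.succ) - f (t i.castSucc)) ^ 2
          ≤ Finset.univ.card • (2*C/((((n:ℕ)+1)*((n:ℕ)+1) : ℕ):ℝ))^2 :=
            Finset.sum_le_card_nsmul _ _ _ hbd
        _ = (((π n).n : ℕ):ℝ) * (2*C/((((n:ℕ)+1)*((n:ℕ)+1) : ℕ):ℝ))^2 := by
            rw [Finset.card_univ, Fintype.card_fin, nsmul_eq_mul]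
        _ = (2*C)^2 / ((n:ℝ)+1) := by
            rw [hπn]
            have hA0 : ((n:ℝ)+1) ≠ 0 := by positivity
            push_cast
            field_simp
    -- straddle sum bound
    have hstrad : ∑ i : Fin (π n).n,
        (if t i.castSucc < u ∧ u < t i.succ then ε'^2 else 0) ≤ ε'^2 := by
      rw [← Finset.sum_filter]
      have hcard : (Finset.univ.filter
          (fun i : Fin (π n).n => t i.castSucc < u ∧ u < t i.succ)).card ≤ 1 := by
        rw [Finset.card_le_one]
        intro a ha b hb
        simp only [Finset.mem_filter] at ha hb
        by_contra hne
        rcases lt_or_gt_of_ne hne with hlt | hlt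
        · have := (π n).mono (Fin.succ_le_castSucc_iff.mpr hlt)
          have h1 := ha.2.2
          have h2 := hb.2.1
          simp only [← ht] at this
          linarith
        · have := (π n).mono (Fin.succ_le_castSucc_iff.mpr hlt)
          have h1 := hb.2.2
          have h2 := ha.2.1
          simp only [← ht] at this
          linarith
      rw [Finset.sum_const, nsmul_eq_mul]
      have hcard' : ((Finset.univ.filter
          (fun i : Fin (π n).n => t i.castSucc < u ∧ u < t i.succ)).card : ℝ) ≤ 1 := by
        exact_mod_cast hcard
      nlinarith [sq_nonneg ε']
    calc ∑ i : Fin (π n).n, (f (min (t i.succ) u) - f (min (t i.castSucc) u)) ^ 2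
        ≤ ∑ i : Fin (π n).n, ((f (t i.succ) - f (t i.castSucc)) ^ 2 +
            (if t i.castSucc < u ∧ u < t i.succ then ε'^2 else 0)) :=
          Finset.sum_le_sum fun i _ => hterm i
      _ = (∑ i : Fin (π n).n, (f (t i.succ) - f (t i.castSucc)) ^ 2) +
            ∑ i : Fin (π n).n, (if t i.castSucc < u ∧ u < t i.succ then ε'^2 else 0) :=
          Finset.sum_add_distrib
      _ ≤ (2*C)^2 / ((n:ℝ)+1) + ε'^2 := add_le_add hS hstrad
      _ < ε/2 + ε/2 := by linarith
      _ = ε := by ring
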